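/- If X is the distance to the nearest point of a homogeneous planar Poisson process of intensity λ_p > 0 (so X has density f(x) = 2πλ_p x e^{-πλ_p x²} on (0,∞)), then the expectation E[min{1, X^{-2}}] equals 1 - e^{-πλ_p} - πλ_p · Ei(-πλ_p). -/

import Mathlib

open Real MeasureTheory Filter

/-- If `X` has density `f(x) = 2πλ_p x e^{-πλ_p x²}` on `(0,∞)` (nearest-point distance of a
planar PPP of intensity `λ_p`), then `E[min{1, X⁻²}] = 1 - e^{-πλ_p} - πλ_p Ei(-πλ_p)`. -/
theorem stmt_2 (Ei : ℝ → ℝ)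
    (hEi : ∀ y : ℝ, 0 < y → Ei (-y) = -∫ t in Set.Ioi y, Real.exp (-t) / t)
    (lp : ℝ) (hlp : 0 < lp) :
    ∫ x in Set.Ioi (0:ℝ),
        min 1 (x ^ (-2 : ℝ)) * (2 * π * lp * x * Real.exp (-(π * lp * x ^ 2))) =
      1 - Real.exp (-(π * lp)) - π * lp * Ei (-(π * lp)) := by
  set a := π * lp with ha_def
  have ha : 0 < a := by positivity
  set F : ℝ → ℝ := fun x =>
    min 1 (x ^ (-2 : ℝ)) * (2 * π * lp * x * Real.exp (-(a * x ^ 2))) with hF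
  set g : ℝ → ℝ := fun t => Real.exp (-t) / t with hg
  -- derivative of a*x^2
  have hderiv : ∀ x : ℝ, HasDerivAt (fun x : ℝ => a * x ^ 2) (2 * a * x) x := by
    intro x
    have h := (hasDerivAt_pow 2 x).const_mul a
    norm_num at h
    rw [show 2 * a * x = a * (2 * x) by ring]
    exact h
  -- EqOn for the first piece
  have hEq1 : Set.EqOn (fun x => 2 * π * lp * x * Real.exp (-(a * x ^ 2))) F (Set.Ioc 0 1) := by
    intro x hx
    have hx0 : 0 < x := hx.1
    have h1 : (1:ℝ) ≤ x ^ (-2:ℝ) :=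
      Real.one_le_rpow_of_pos_of_le_one_of_nonpos hx0 hx.2 (by norm_num)
    simp only [hF, min_eq_left h1, one_mul]
  -- EqOn for the second piece
  have hEq2 : Set.EqOn (fun x => a * (((g ∘ fun x => a * x ^ 2) x) * (2 * a * x))) F
      (Set.Ioi 1) := by
    intro x hx
    have hx1 : (1:ℝ) < x := hx
    have hx0 : 0 < x := lt_trans one_pos hx1
    have hmin : min 1 (x ^ (-2:ℝ)) = x ^ (-2:ℝ) :=
      min_eq_right (Real.rpow_le_one_of_one_le_of_nonpos hx1.le (by norm_num))
    have hrpow : x ^ (-2:ℝ) = (x ^ 2)⁻¹ := by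
      rw [show (-2:ℝ) = ((-2:ℤ):ℝ) by norm_num, Real.rpow_intCast]
      simp [zpow_ofNat]
    simp only [hF, hg, Function.comp_apply]
    rw [hmin, hrpow]
    have hx2 : x ^ 2 ≠ 0 := by positivity
    field_simp
    ring
  -- integrability of the density on Ioc 0 1
  have hcont : Continuous fun x : ℝ => 2 * π * lp * x * Real.exp (-(a * x ^ 2)) := by
    continuity
  have hint1 : IntegrableOn F (Set.Ioc 0 1) :=
    (hcont.integrableOn_Ioc).congr_fun hEq1 measurableSet_Ioc
  -- integrability of the substituted integrand on Ici 1
  have hgauss : Integrable fun x : ℝ => Real.exp (-a * x ^ 2) := integrable_exp_neg_mul_sq ha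
  have hg2 : IntegrableOn (fun x => ((g ∘ fun x => a * x ^ 2) x) * (2 * a * x))
      (Set.Ici 1) := by
    refine Integrable.mono ((hgauss.const_mul 2).restrict (s := Set.Ici 1)) ?_ ?_
    · refine AEStronglyMeasurable.restrict ?_
      exact (((Real.measurable_exp.comp measurable_neg).comp
        ((measurable_const.mul (measurable_id.pow_const 2)))).div
        (measurable_const.mul (measurable_id.pow_const 2))).mul
        (measurable_const.mul measurable_id) |>.aestronglyMeasurable
    · refine (ae_restrict_mem measurableSet_Ici).mono ?_
      intro x hx
      have hx1 : (1:ℝ) ≤ x := hx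
      have hx0 : 0 < x := lt_of_lt_of_le one_pos hx1
      have hax2 : (0:ℝ) < a * x ^ 2 := by positivity
      have heq : ((g ∘ fun x => a * x ^ 2) x) * (2 * a * x)
          = 2 * Real.exp (-(a * x ^ 2)) / x := by
        simp only [hg, Function.comp_apply]
        field_simp
      rw [heq]
      have h1 : 2 * Real.exp (-(a * x ^ 2)) / x ≤ 2 * Real.exp (-(a * x ^ 2)) :=
        div_le_self (by positivity) hx1
      have h2 : (0:ℝ) ≤ 2 * Real.exp (-(a * x ^ 2)) / x := by positivity
      rw [Real.norm_of_nonneg h2, Real.norm_of_nonneg (by positivity)]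
      calc 2 * Real.exp (-(a * x ^ 2)) / x ≤ 2 * Real.exp (-(a * x ^ 2)) := h1
        _ = 2 * Real.exp (-a * x ^ 2) := by ring_nf
  -- integrability of g on Ici a
  have hgint : IntegrableOn g (Set.Ici a) := by
    have hexp : IntegrableOn (fun t : ℝ => Real.exp (-1 * t)) (Set.Ioi a) :=
      exp_neg_integrableOn_Ioi a one_pos
    rw [integrableOn_Ici_iff_integrableOn_Ioi]
    refine Integrable.mono ((hexp.const_mul (1/a))) ?_ ?_
    · exact (((Real.measurable_exp.comp measurable_neg).div measurable_id).aestronglyMeasurable).restrict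
    · refine (ae_restrict_mem measurableSet_Ioi).mono ?_
      intro t ht
      have ht0 : 0 < t := lt_trans ha ht
      have hgt : g t = Real.exp (-t) / t := rfl
      rw [hgt, Real.norm_of_nonneg (by positivity), Real.norm_of_nonneg (by positivity),
        neg_one_mul, one_div, inv_mul_eq_div]
      gcongr
      exact ht.le
  -- the substitution
  have himg : (fun x : ℝ => a * x ^ 2) '' Set.Ici 1 ⊆ Set.Ici a := by
    rintro _ ⟨x, hx, rfl⟩
    have hx1 : (1:ℝ) ≤ x := hx
    have h2 : (1:ℝ) ≤ x ^ 2 := one_le_pow₀ hx1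
    have h3 := mul_le_mul_of_nonneg_left h2 ha.le
    simpa using h3
  have himg' : (fun x : ℝ => a * x ^ 2) '' Set.Ioi 1 ⊆ {t : ℝ | t ≠ 0} := by
    rintro _ ⟨x, hx, rfl⟩
    have hx1 : (1:ℝ) < x := hx
    have : (0:ℝ) < a * x ^ 2 := by positivity
    exact ne_of_gt this
  have hgcont : ContinuousOn g {t : ℝ | t ≠ 0} := by
    apply ContinuousOn.div
    · exact (Real.continuous_exp.comp continuous_neg).continuousOn
    · exact continuousOn_id
    · intro t ht; exact ht
  have hsub :
      (∫ x in Set.Ioi (1:ℝ), ((g ∘ fun x => a * x ^ 2) x) * (2 * a * x))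
        = ∫ u in Set.Ioi (a * 1 ^ 2), g u := by
    refine MeasureTheory.integral_comp_mul_deriv_Ioi ?_ ?_ ?_ ?_ ?_ hg2
    · exact (continuous_const.mul (continuous_pow 2)).continuousOn
    · exact (tendsto_pow_atTop (two_ne_zero)).const_mul_atTop ha
    · intro x _; exact (hderiv x).hasDerivWithinAt
    · exact hgcont.mono himg'
    · exact hgint.mono_set himg
  have hint2 : IntegrableOn F (Set.Ioi 1) := by
    refine IntegrableOn.congr_fun ?_ hEq2 measurableSet_Ioi
    exact (hg2.mono_set Set.Ioi_subset_Ici_self).const_mul a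
  -- split the integral
  have hsplit : (∫ x in Set.Ioi (0:ℝ), F x)
      = (∫ x in Set.Ioc (0:ℝ) 1, F x) + ∫ x in Set.Ioi (1:ℝ), F x := by
    rw [← Set.Ioc_union_Ioi_eq_Ioi (zero_le_one : (0:ℝ) ≤ 1)]
    exact MeasureTheory.setIntegral_union (Set.Ioc_disjoint_Ioi le_rfl)
      measurableSet_Ioi hint1 hint2
  -- first piece
  have hpiece1 : (∫ x in Set.Ioc (0:ℝ) 1, F x) = 1 - Real.exp (-a) := by
    rw [← MeasureTheory.setIntegral_congr_fun measurableSet_Ioc hEq1]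
    rw [← intervalIntegral.integral_of_le (zero_le_one : (0:ℝ) ≤ 1)]
    have hFTC := intervalIntegral.integral_eq_sub_of_hasDerivAt
      (f := fun x : ℝ => -Real.exp (-(a * x ^ 2)))
      (f' := fun x : ℝ => 2 * π * lp * x * Real.exp (-(a * x ^ 2)))
      (a := (0:ℝ)) (b := 1) ?_ ?_
    · rw [hFTC]; norm_num; ring
    · intro x _
      have h := (((hderiv x).neg).exp).neg
      convert h using 1
      · ext y
        simp only [Pi.neg_apply, ha_def]
      · simp only [Pi.neg_apply]
        rw [ha_def]
        ring
    · exact hcont.intervalIntegrable 0 1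
  -- second piece
  have hpiece2 : (∫ x in Set.Ioi (1:ℝ), F x) = a * ∫ u in Set.Ioi a, g u := by
    rw [← MeasureTheory.setIntegral_congr_fun measurableSet_Ioi hEq2,
      MeasureTheory.integral_const_mul, hsub]
    norm_num
  have hFgoal : (∫ x in Set.Ioi (0:ℝ),
      min 1 (x ^ (-2 : ℝ)) * (2 * π * lp * x * Real.exp (-(π * lp * x ^ 2))))
      = ∫ x in Set.Ioi (0:ℝ), F x := by
    rw [hF, ha_def]
  rw [hFgoal, hsplit, hpiece1, hpiece2, hEi a ha]
  ring
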